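/- Uniqueness of compatible connections: if the axial function α on Γ is 3-independent, then there is at most one connection on Γ compatible with α; i.e., if ∇ and ∇' are connections on Γ, both compatible with α, then ∇_e = ∇'_e for every oriented edge e. -/
import Mathlib


open MvPolynomial TensorProduct

/-- A graph with an axial function: finite sets of vertices and oriented edges,
initial/terminal maps, a fixed-point-free orientation-reversing involution, and
weights `w e ∈ ℤ^n` with `w e ≠ 0` and `w (rev e) = - w e`. -/
structure GKMGraph (n : ℕ) where
  V : Type
  E : Type
  fintV : Fintype V
  fintE : Fintype E
  i : E → V
  t : E → V
  rev : E → E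
  rev_rev : ∀ e, rev (rev e) = e
  rev_ne : ∀ e, rev e ≠ e
  i_rev : ∀ e, i (rev e) = t e
  t_rev : ∀ e, t (rev e) = i e
  w : E → Fin n → ℤ
  w_ne : ∀ e, w e ≠ 0
  w_rev : ∀ e, w (rev e) = - w e

attribute [instance] GKMGraph.fintV GKMGraph.fintE

/-- The weight `a ∈ ℤ^n` regarded as the linear form `a₁x₁ + ⋯ + aₙxₙ ∈ ℝ[x₁,…,xₙ]`. -/
noncomputable def wtPoly {n : ℕ} (a : Fin n → ℤ) : MvPolynomial (Fin n) ℝ :=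
  ∑ j, MvPolynomial.C (a j : ℝ) * MvPolynomial.X j

/-- The weight of an edge regarded as a vector in `ℚ^n`. -/
def GKMGraph.wQ {n : ℕ} (G : GKMGraph n) (e : G.E) : Fin n → ℚ :=
  fun j => (G.w e j : ℚ)

/-- `Γ` is `d`-valent: every vertex has exactly `d` outgoing oriented edges. -/
def GKMGraph.Valent {n : ℕ} (G : GKMGraph n) (d : ℕ) : Prop :=
  ∀ p : G.V, {e : G.E | G.i e = p}.ncard = d

/-- The axial function is 2-independent: the weights of any two distinct edges
issuing from the same vertex are `ℚ`-linearly independent. -/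
def GKMGraph.TwoIndep {n : ℕ} (G : GKMGraph n) : Prop :=
  ∀ e e' : G.E, G.i e = G.i e' → e ≠ e' →
    LinearIndependent ℚ ![G.wQ e, G.wQ e']

/-- `nab` is a connection on `Γ`: for each oriented edge `e` it gives a bijection
`∇_e : E_{i(e)} → E_{t(e)}` with `∇_{ē} = (∇_e)⁻¹`.  (Values of `nab e` outside
`E_{i(e)}` are irrelevant.) -/
def GKMGraph.IsConnection {n : ℕ} (G : GKMGraph n) (nab : G.E → G.E → G.E) : Prop :=
  (∀ e : G.E, Set.BijOn (nab e) {e' | G.i e' = G.i e} {e'' | G.i e'' = G.t e}) ∧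
  (∀ e e' : G.E, G.i e' = G.i e → nab (G.rev e) (nab e e') = e')

/-- The connection `nab` is compatible with the axial function: for every edge `e`
and every `e' ∈ E_{i(e)}`, the difference `α_{∇_e e'} - α_{e'}` is an integer
multiple of `α_e`. -/
def GKMGraph.Compatible {n : ℕ} (G : GKMGraph n) (nab : G.E → G.E → G.E) : Prop :=
  ∀ e e' : G.E, G.i e' = G.i e → ∃ m : ℤ, G.w (nab e e') = G.w e' + m • G.w e

/-- The pairing `⟨α_e, ξ⟩` of the weight of an edge with a vector `ξ ∈ ℝ^n`. -/
noncomputable def GKMGraph.pairing {n : ℕ} (G : GKMGraph n) (e : G.E) (ξ : Fin n → ℝ) : ℝ :=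
  ∑ j, (G.w e j : ℝ) * ξ j

/-- `ξ ∈ ℝ^n` is generic if `⟨α_e, ξ⟩ ≠ 0` for every edge `e`. -/
def GKMGraph.Generic {n : ℕ} (G : GKMGraph n) (ξ : Fin n → ℝ) : Prop :=
  ∀ e : G.E, G.pairing e ξ ≠ 0

/-- `σ_p(ξ)`: the number of edges issuing from `p` with `⟨α_e, ξ⟩ < 0`. -/
noncomputable def GKMGraph.sigma {n : ℕ} (G : GKMGraph n) (p : G.V) (ξ : Fin n → ℝ) : ℕ :=
  {e : G.E | G.i e = p ∧ G.pairing e ξ < 0}.ncard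

/-- The combinatorial Betti number `β_k(Γ;ξ) = #{p ∈ V : σ_p(ξ) = k}`. -/
noncomputable def GKMGraph.betti {n : ℕ} (G : GKMGraph n) (ξ : Fin n → ℝ) (k : ℕ) : ℕ :=
  {p : G.V | G.sigma p ξ = k}.ncard

/-- The axial function is 3-independent: for every vertex `p`, the weights of any
(at most three) distinct edges issuing from `p` are `ℚ`-linearly independent. -/
def GKMGraph.ThreeIndep {n : ℕ} (G : GKMGraph n) : Prop :=
  ∀ p : G.V, ∀ s : Finset G.E, (∀ e ∈ s, G.i e = p) → s.card ≤ 3 →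
    LinearIndependent ℚ (fun e : s => G.wQ e)


lemma GKMGraph.wQ_eq {n : ℕ} (G : GKMGraph n) {f e' e : G.E} {m : ℤ}
    (hm : G.w f = G.w e' + m • G.w e) :
    G.wQ f = G.wQ e' + (m : ℚ) • G.wQ e := by
  funext j
  have := congrFun hm j
  simp only [Pi.add_apply, Pi.smul_apply, smul_eq_mul] at this
  simp only [GKMGraph.wQ, Pi.add_apply, Pi.smul_apply, smul_eq_mul, this]
  push_cast
  ring

lemma GKMGraph.wQ_rev {n : ℕ} (G : GKMGraph n) (e : G.E) :
    G.wQ (G.rev e) = - G.wQ e := by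
  funext j
  simp [GKMGraph.wQ, G.w_rev]

/-- From 3-independence: a vanishing relation among two distinct edges at `p` has
zero coefficients. -/
lemma two_rel {n : ℕ} (G : GKMGraph n) (h3 : G.ThreeIndep)
    {e1 e2 : G.E} (h12 : e1 ≠ e2) (h1 : G.i e1 = G.i e2)
    {a b : ℚ} (hrel : a • G.wQ e1 + b • G.wQ e2 = 0) : a = 0 ∧ b = 0 := by
  classical
  have hli := h3 (G.i e2) {e1, e2}
    (by intro x hx; rcases Finset.mem_insert.1 hx with rfl | hx
        · exact h1
        · rcases Finset.mem_singleton.1 hx with rfl; rfl)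
    (by have := Finset.card_insert_le e1 ({e2} : Finset G.E)
        simp only [Finset.card_singleton] at this; omega)
  rw [Fintype.linearIndependent_iff] at hli
  set c : G.E → ℚ := fun x => if x = e1 then a else b with hc
  have hsum : ∑ x : ({e1, e2} : Finset G.E), c x • G.wQ x = 0 := by
    rw [Finset.sum_coe_sort ({e1, e2} : Finset G.E) (fun x => c x • G.wQ x)]
    rw [Finset.sum_insert (by simpa using h12), Finset.sum_singleton]
    simpa [hc, h12.symm] using hrel
  have key := hli (fun x => c x) hsum
  constructor
  · have := key ⟨e1, by simp⟩
    simpa [hc] using this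
  · have := key ⟨e2, by simp⟩
    simpa [hc, h12.symm] using this

/-- From 3-independence: a vanishing relation among three distinct edges at `p` has
zero coefficients. -/
lemma three_rel {n : ℕ} (G : GKMGraph n) (h3 : G.ThreeIndep)
    {e1 e2 e3 : G.E} (h12 : e1 ≠ e2) (h13 : e1 ≠ e3) (h23 : e2 ≠ e3)
    (h1 : G.i e1 = G.i e3) (h2 : G.i e2 = G.i e3)
    {a b c : ℚ} (hrel : a • G.wQ e1 + b • G.wQ e2 + c • G.wQ e3 = 0) :
    a = 0 ∧ b = 0 ∧ c = 0 := by
  classical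
  have hli := h3 (G.i e3) {e1, e2, e3}
    (by intro x hx
        rcases Finset.mem_insert.1 hx with rfl | hx
        · exact h1
        rcases Finset.mem_insert.1 hx with rfl | hx
        · exact h2
        rcases Finset.mem_singleton.1 hx with rfl; rfl)
    (by have h1' := Finset.card_insert_le e1 ({e2, e3} : Finset G.E)
        have h2' := Finset.card_insert_le e2 ({e3} : Finset G.E)
        simp only [Finset.card_singleton] at h2'
        omega)
  rw [Fintype.linearIndependent_iff] at hli
  set f : G.E → ℚ := fun x => if x = e1 then a else if x = e2 then b else c with hf
  have hsum : ∑ x : ({e1, e2, e3} : Finset G.E), f x • G.wQ x = 0 := by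
    rw [Finset.sum_coe_sort ({e1, e2, e3} : Finset G.E) (fun x => f x • G.wQ x)]
    rw [Finset.sum_insert (by simp [h12, h13]), Finset.sum_insert (by simpa using h23),
      Finset.sum_singleton]
    simpa [hf, h12.symm, h13.symm, h23.symm, add_assoc] using hrel
  have key := hli (fun x => f x) hsum
  refine ⟨?_, ?_, ?_⟩
  · have := key ⟨e1, by simp⟩
    simpa [hf] using this
  · have := key ⟨e2, by simp⟩
    simpa [hf, h12.symm] using this
  · have := key ⟨e3, by simp⟩
    simpa [hf, h13.symm, h23.symm] using this

/-- uniqueness of compatible connections.  If `α` is 3-independent and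
`∇`, `∇'` are connections on `Γ` both compatible with `α`, then `∇_e = ∇'_e` for
every oriented edge `e` (i.e. they agree on `E_{i(e)}`). -/
theorem compatible_connection_unique {n : ℕ} (G : GKMGraph n)
    (h3 : G.ThreeIndep)
    (nab nab' : G.E → G.E → G.E)
    (hconn : G.IsConnection nab) (hcomp : G.Compatible nab)
    (hconn' : G.IsConnection nab') (hcomp' : G.Compatible nab') :
    ∀ e e' : G.E, G.i e' = G.i e → nab e e' = nab' e e' := by
  intro e e' h
  by_contra hne
  set f := nab e e' with hfdef
  set g := nab' e e' with hgdef
  have hif : G.i f = G.t e := (hconn.1 e).mapsTo h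
  have hig : G.i g = G.t e := (hconn'.1 e).mapsTo h
  have hirev : G.i (G.rev e) = G.t e := G.i_rev e
  obtain ⟨m, hm⟩ := hcomp e e' h
  obtain ⟨m', hm'⟩ := hcomp' e e' h
  have hfQ : G.wQ f = G.wQ e' + (m : ℚ) • G.wQ e := G.wQ_eq hm
  have hgQ : G.wQ g = G.wQ e' + (m' : ℚ) • G.wQ e := G.wQ_eq hm'
  have hrevQ : G.wQ (G.rev e) = - G.wQ e := G.wQ_rev e
  have hfg : f ≠ g := hne
  have hweQ : G.wQ e ≠ 0 := by
    intro h0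
    have : G.w e = 0 := by
      funext j
      have := congrFun h0 j
      simp only [GKMGraph.wQ, Pi.zero_apply] at this ⊢
      exact_mod_cast this
    exact G.w_ne e this
  by_cases hf : f = G.rev e
  · -- f = rev e
    have hke : e' = e := by
      by_contra he'
      have hrel : (1 : ℚ) • G.wQ e' + ((m : ℚ) + 1) • G.wQ e = 0 := by
        have : - G.wQ e = G.wQ e' + (m : ℚ) • G.wQ e := by rw [← hrevQ, ← hf]; exact hfQ
        rw [one_smul, add_smul, one_smul]
        linear_combination (norm := module) this.symm
      exact one_ne_zero ((two_rel G h3 he' h hrel).1 : (1:ℚ) = 0)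
    rw [hke] at hgQ
    have hg' : g ≠ G.rev e := fun hg' => hfg (hf.trans hg'.symm)
    have hrel : (1 : ℚ) • G.wQ g + ((m' : ℚ) + 1) • G.wQ (G.rev e) = 0 := by
      rw [hrevQ, one_smul]
      linear_combination (norm := module) hgQ
    exact one_ne_zero ((two_rel G h3 hg' (hig.trans hirev.symm) hrel).1 : (1:ℚ) = 0)
  · by_cases hg : g = G.rev e
    · have hke : e' = e := by
        by_contra he'
        have hrel : (1 : ℚ) • G.wQ e' + ((m' : ℚ) + 1) • G.wQ e = 0 := by
          have : - G.wQ e = G.wQ e' + (m' : ℚ) • G.wQ e := by rw [← hrevQ, ← hg]; exact hgQ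
          linear_combination (norm := module) this.symm
        exact one_ne_zero ((two_rel G h3 he' h hrel).1 : (1:ℚ) = 0)
      rw [hke] at hfQ
      have hrel : (1 : ℚ) • G.wQ f + ((m : ℚ) + 1) • G.wQ (G.rev e) = 0 := by
        rw [hrevQ]
        linear_combination (norm := module) hfQ
      exact one_ne_zero ((two_rel G h3 hf (hif.trans hirev.symm) hrel).1 : (1:ℚ) = 0)
    · -- f, g, rev e distinct at t e
      have hrel : (1 : ℚ) • G.wQ f + (-1 : ℚ) • G.wQ g
          + ((m : ℚ) - (m' : ℚ)) • G.wQ (G.rev e) = 0 := by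
        rw [hrevQ]
        linear_combination (norm := module) hfQ - hgQ
      exact one_ne_zero
        ((three_rel G h3 hfg hf hg (hif.trans hirev.symm) (hig.trans hirev.symm) hrel).1
          : (1:ℚ) = 0)
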